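/- For every real m > 1 there exists a constant C(m) > 0 such that for all integers j ≥ 1 and k ≥ 1, (2/(j+k−1)) Σ_{i=1}^{j+k−1} i^m ≤ (2/(m+1)) (j^m + k^m) + C(m) (j^{m−1} k + j k^{m−1}). Consequently, the uniform daughter distribution B_{j,k}^i = 2/(j+k−1) for 1 ≤ i ≤ j+k−1 satisfies Σ_{i=1}^{j+k−1} i^m B_{j,k}^i ≤ (1−ε_m)(j^m + k^m) + κ_m (j k^{m−1} + j^{m−1} k) with ε_m = (m−1)/(m+1) ∈ (0,1) and some κ_m ≥ 1. -/

import Mathlib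

open Real Finset

/-- Bernoulli tangent inequality: for `p ≥ 1`, `x > 0`, `t ≥ 0`,
`x^p + p x^(p-1) (t - x) ≤ t^p`. -/
lemma bern_aux {p x t : ℝ} (hp : 1 ≤ p) (hx : 0 < x) (ht : 0 ≤ t) :
    x ^ p + p * x ^ (p - 1) * (t - x) ≤ t ^ p := by
  have hs : -1 ≤ t / x - 1 := by
    have : 0 ≤ t / x := div_nonneg ht hx.le
    linarith
  have h := one_add_mul_self_le_rpow_one_add hs hp
  have h1 : (1 : ℝ) + (t / x - 1) = t / x := by ring
  rw [h1] at h
  have hxp : (0:ℝ) < x ^ p := Real.rpow_pos_of_pos hx p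
  have h2 : x ^ p * (1 + p * (t / x - 1)) ≤ x ^ p * (t / x) ^ p :=
    mul_le_mul_of_nonneg_left h hxp.le
  have h3 : x ^ p * (t / x) ^ p = t ^ p := by
    rw [Real.div_rpow ht hx.le, mul_div_cancel₀]
    exact (Real.rpow_pos_of_pos hx p).ne'
  have h4 : x ^ p * (1 + p * (t / x - 1)) = x ^ p + p * x ^ (p - 1) * (t - x) := by
    have hxp1 : x ^ (p - 1) = x ^ p / x := by
      rw [Real.rpow_sub hx, Real.rpow_one]
    rw [hxp1]
    linear_combination (p * x ^ p) * (mul_inv_cancel₀ hx.ne')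
  rw [h3, h4] at h2
  exact h2

lemma sum_pow_le (m : ℝ) (hm : 1 < m) (n : ℕ) :
    ∑ i ∈ Finset.range n, (i : ℝ) ^ m ≤ (n : ℝ) ^ (m + 1) / (m + 1) := by
  have hm1 : (0:ℝ) < m + 1 := by linarith
  rw [le_div_iff₀ hm1]
  have key : ∀ i : ℕ, (i : ℝ) ^ m * (m + 1) ≤ ((i:ℝ) + 1) ^ (m + 1) - (i : ℝ) ^ (m + 1) := by
    intro i
    rcases Nat.eq_zero_or_pos i with rfl | hi
    · simp only [Nat.cast_zero]
      rw [Real.zero_rpow (by linarith : m ≠ 0), Real.zero_rpow (by linarith : m + 1 ≠ 0)]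
      simp [Real.one_rpow]
    · have hx : (0:ℝ) < i := by exact_mod_cast hi
      have h := bern_aux (p := m + 1) (x := (i:ℝ)) (t := (i:ℝ) + 1)
        (by linarith) hx (by linarith)
      have : m + 1 - 1 = m := by ring
      rw [this] at h
      nlinarith [h]
  calc (∑ i ∈ Finset.range n, (i : ℝ) ^ m) * (m + 1)
      = ∑ i ∈ Finset.range n, (i : ℝ) ^ m * (m + 1) := by rw [Finset.sum_mul]
    _ ≤ ∑ i ∈ Finset.range n, (((i:ℝ) + 1) ^ (m + 1) - (i : ℝ) ^ (m + 1)) :=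
        Finset.sum_le_sum (fun i _ => key i)
    _ = (n : ℝ) ^ (m + 1) - ((0:ℕ) : ℝ) ^ (m + 1) := by
        have := Finset.sum_range_sub (f := fun i : ℕ => (i : ℝ) ^ (m + 1)) n
        simpa [Nat.cast_add, Nat.cast_one] using this
    _ ≤ (n : ℝ) ^ (m + 1) := by
        simp only [Nat.cast_zero]
        rw [Real.zero_rpow (by linarith : m + 1 ≠ 0)]
        simp

/-- wlog case: `b ≤ a` -/
lemma cross_aux {m a b : ℝ} (hm : 1 < m) (ha : 1 ≤ a) (hb : 1 ≤ b) (hba : b ≤ a) :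
    (a + b) ^ m ≤ a ^ m + m * 2 ^ (m - 1) * (a ^ (m - 1) * b) ∧
    (a + b) ^ (m - 1) ≤ 2 ^ (m - 1) * (a ^ (m - 1) * b + a * b ^ (m - 1)) := by
  have hs : (0:ℝ) < a + b := by linarith
  have h2a : a + b ≤ 2 * a := by linarith
  have hpow : (a + b) ^ (m - 1) ≤ 2 ^ (m - 1) * a ^ (m - 1) := by
    calc (a + b) ^ (m - 1) ≤ (2 * a) ^ (m - 1) :=
          Real.rpow_le_rpow hs.le h2a (by linarith)
      _ = 2 ^ (m - 1) * a ^ (m - 1) := Real.mul_rpow (by norm_num) (by linarith)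
  constructor
  · -- (a+b)^m ≤ a^m + m (a+b)^(m-1) b ≤ a^m + m 2^(m-1) a^(m-1) b
    have h := bern_aux (p := m) (x := a + b) (t := a) hm.le hs (by linarith)
    have hmpos : (0:ℝ) < m := by linarith
    have hb0 : (0:ℝ) ≤ b := by linarith
    have h5 : m * b * (a + b) ^ (m - 1) ≤ m * b * (2 ^ (m - 1) * a ^ (m - 1)) :=
      mul_le_mul_of_nonneg_left hpow (by positivity)
    nlinarith [h, h5]
  · have hb1 : a ^ (m - 1) ≤ a ^ (m - 1) * b := le_mul_of_one_le_right
      (Real.rpow_nonneg (by linarith) _) hb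
    have hcross : (0:ℝ) ≤ a * b ^ (m - 1) :=
      mul_nonneg (by linarith) (Real.rpow_nonneg (by linarith) _)
    have h2 : (0:ℝ) < (2:ℝ) ^ (m - 1) := Real.rpow_pos_of_pos (by norm_num) _
    nlinarith [hpow]

lemma cross (m a b : ℝ) (hm : 1 < m) (ha : 1 ≤ a) (hb : 1 ≤ b) :
    (a + b) ^ m + 2 * (a + b) ^ (m - 1) ≤
      a ^ m + b ^ m + (m + 2) * 2 ^ (m - 1) * (a ^ (m - 1) * b + a * b ^ (m - 1)) := by
  have hbm : (0:ℝ) ≤ b ^ m := Real.rpow_nonneg (by linarith) _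
  have ham : (0:ℝ) ≤ a ^ m := Real.rpow_nonneg (by linarith) _
  have hc1 : (0:ℝ) ≤ a ^ (m-1) * b := mul_nonneg (Real.rpow_nonneg (by linarith) _) (by linarith)
  have hc2 : (0:ℝ) ≤ a * b ^ (m-1) := mul_nonneg (by linarith) (Real.rpow_nonneg (by linarith) _)
  have hmp : (0:ℝ) < m := by linarith
  have h2p : (0:ℝ) < (2:ℝ) ^ (m - 1) := Real.rpow_pos_of_pos (by norm_num) _
  rcases le_total b a with hba | hab
  · obtain ⟨h1, h2⟩ := cross_aux hm ha hb hba
    nlinarith [h1, h2, mul_nonneg (mul_nonneg hmp.le h2p.le) hc2]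
  · obtain ⟨h1, h2⟩ := cross_aux hm hb ha hab
    rw [add_comm b a] at h1 h2
    nlinarith [h1, h2, mul_nonneg (mul_nonneg hmp.le h2p.le) hc1]

theorem stmt5 (m : ℝ) (hm : 1 < m) :
    ∃ C : ℝ, 0 < C ∧
      (∀ j k : ℕ, 1 ≤ j → 1 ≤ k →
        (2 / ((j : ℝ) + (k : ℝ) - 1)) * ∑ i ∈ Finset.Ico 1 (j + k), (i : ℝ) ^ m ≤
          (2 / (m + 1)) * ((j : ℝ) ^ m + (k : ℝ) ^ m) +
            C * ((j : ℝ) ^ (m - 1) * (k : ℝ) + (j : ℝ) * (k : ℝ) ^ (m - 1))) ∧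
      (0 < (m - 1) / (m + 1) ∧ (m - 1) / (m + 1) < 1) ∧
      (∃ κ : ℝ, 1 ≤ κ ∧ ∀ j k : ℕ, 1 ≤ j → 1 ≤ k →
        ∑ i ∈ Finset.Ico 1 (j + k), (i : ℝ) ^ m * (2 / ((j : ℝ) + (k : ℝ) - 1)) ≤
          (1 - (m - 1) / (m + 1)) * ((j : ℝ) ^ m + (k : ℝ) ^ m) +
            κ * ((j : ℝ) * (k : ℝ) ^ (m - 1) + (j : ℝ) ^ (m - 1) * (k : ℝ))) := by
  have hm1 : (0:ℝ) < m + 1 := by linarith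
  set C : ℝ := (2 / (m + 1)) * ((m + 2) * 2 ^ (m - 1)) with hC
  have hCpos : 0 < C := by
    apply mul_pos (div_pos (by norm_num) hm1)
    exact mul_pos (by linarith) (Real.rpow_pos_of_pos (by norm_num) _)
  have main : ∀ j k : ℕ, 1 ≤ j → 1 ≤ k →
      (2 / ((j : ℝ) + (k : ℝ) - 1)) * ∑ i ∈ Finset.Ico 1 (j + k), (i : ℝ) ^ m ≤
        (2 / (m + 1)) * ((j : ℝ) ^ m + (k : ℝ) ^ m) +
          C * ((j : ℝ) ^ (m - 1) * (k : ℝ) + (j : ℝ) * (k : ℝ) ^ (m - 1)) := by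
    intro j k hj hk
    have ha : (1:ℝ) ≤ (j:ℝ) := by exact_mod_cast hj
    have hb : (1:ℝ) ≤ (k:ℝ) := by exact_mod_cast hk
    set a := (j:ℝ); set b := (k:ℝ)
    have hs2 : (2:ℝ) ≤ a + b := by linarith
    have hn : (0:ℝ) < a + b - 1 := by linarith
    -- sum over Ico = sum over range
    have hsum_eq : ∑ i ∈ Finset.Ico 1 (j + k), (i : ℝ) ^ m
        = ∑ i ∈ Finset.range (j + k), (i : ℝ) ^ m := by
      rw [Finset.range_eq_Ico, Finset.sum_eq_sum_Ico_succ_bot (by omega : 0 < j + k)]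
      simp [Real.zero_rpow (by linarith : m ≠ 0)]
    have hcast : ((j + k : ℕ) : ℝ) = a + b := by push_cast; ring
    have hS : ∑ i ∈ Finset.Ico 1 (j + k), (i : ℝ) ^ m ≤ (a + b) ^ (m + 1) / (m + 1) := by
      rw [hsum_eq, ← hcast]
      exact sum_pow_le m hm _
    have step1 : (2 / (a + b - 1)) * ∑ i ∈ Finset.Ico 1 (j + k), (i : ℝ) ^ m ≤
        (2 / (m + 1)) * ((a + b) ^ (m + 1) / (a + b - 1)) := by
      have h1 : (2 / (a + b - 1)) * ∑ i ∈ Finset.Ico 1 (j + k), (i : ℝ) ^ m ≤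
          (2 / (a + b - 1)) * ((a + b) ^ (m + 1) / (m + 1)) :=
        mul_le_mul_of_nonneg_left hS (by positivity)
      calc (2 / (a + b - 1)) * ∑ i ∈ Finset.Ico 1 (j + k), (i : ℝ) ^ m
          ≤ (2 / (a + b - 1)) * ((a + b) ^ (m + 1) / (m + 1)) := h1
        _ = (2 / (m + 1)) * ((a + b) ^ (m + 1) / (a + b - 1)) := by
            field_simp
    have step2 : (a + b) ^ (m + 1) / (a + b - 1) ≤ (a + b) ^ m + 2 * (a + b) ^ (m - 1) := by
      rw [div_le_iff₀ hn]
      have hsp : (0:ℝ) < a + b := by linarith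
      have e1 : (a + b) ^ (m + 1) = (a + b) ^ m * (a + b) := by
        rw [Real.rpow_add_one hsp.ne' m]
      have e2 : (a + b) ^ m = (a + b) ^ (m - 1) * (a + b) := by
        rw [← Real.rpow_add_one hsp.ne' (m - 1)]; ring_nf
      have hp1 : (0:ℝ) < (a + b) ^ (m - 1) := Real.rpow_pos_of_pos hsp _
      nlinarith [hp1]
    have step3 := cross m a b hm ha hb
    have h2m : (0:ℝ) < 2 / (m + 1) := div_pos (by norm_num) hm1
    calc (2 / (a + b - 1)) * ∑ i ∈ Finset.Ico 1 (j + k), (i : ℝ) ^ m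
        ≤ (2 / (m + 1)) * ((a + b) ^ (m + 1) / (a + b - 1)) := step1
      _ ≤ (2 / (m + 1)) * ((a + b) ^ m + 2 * (a + b) ^ (m - 1)) :=
          mul_le_mul_of_nonneg_left step2 h2m.le
      _ ≤ (2 / (m + 1)) * (a ^ m + b ^ m + (m + 2) * 2 ^ (m - 1) * (a ^ (m - 1) * b + a * b ^ (m - 1))) :=
          mul_le_mul_of_nonneg_left step3 h2m.le
      _ = (2 / (m + 1)) * (a ^ m + b ^ m) + C * (a ^ (m - 1) * b + a * b ^ (m - 1)) := by
          rw [hC]; ring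
  refine ⟨C, hCpos, main, ⟨div_pos (by linarith) hm1, (div_lt_one hm1).mpr (by linarith)⟩,
    max C 1, le_max_right _ _, ?_⟩
  intro j k hj hk
  have h := main j k hj hk
  have hone : 1 - (m - 1) / (m + 1) = 2 / (m + 1) := by
    field_simp
    ring
  have hsum : ∑ i ∈ Finset.Ico 1 (j + k), (i : ℝ) ^ m * (2 / ((j : ℝ) + (k : ℝ) - 1))
      = (2 / ((j : ℝ) + (k : ℝ) - 1)) * ∑ i ∈ Finset.Ico 1 (j + k), (i : ℝ) ^ m := by
    rw [← Finset.sum_mul, mul_comm]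
  rw [hsum, hone]
  have hc1 : (0:ℝ) ≤ (j:ℝ) ^ (m-1) * k + (j:ℝ) * (k:ℝ) ^ (m-1) := by
    have hj' : (0:ℝ) ≤ (j:ℝ) := Nat.cast_nonneg j
    have hk' : (0:ℝ) ≤ (k:ℝ) := Nat.cast_nonneg k
    positivity
  have : C * ((j:ℝ) ^ (m-1) * k + (j:ℝ) * (k:ℝ) ^ (m-1)) ≤
      max C 1 * ((j:ℝ) * (k:ℝ) ^ (m-1) + (j:ℝ) ^ (m-1) * k) := by
    rw [add_comm ((j:ℝ) * (k:ℝ) ^ (m-1))]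
    exact mul_le_mul_of_nonneg_right (le_max_left _ _) hc1
  linarith [h]
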